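/- arXiv:2203.06166 — 2 statements merged into one kernel-verified Lean document; each statement's English description precedes it below -/
import Mathlib

section
/- lim ≡_W MCT: the limit problem on Baire space is continuously Weihrauch equivalent to the monotone convergence theorem, i.e., to the problem of computing the supremum of a monotonically increasing bounded sequence of real numbers (given by Cauchy names). -/
open Filter Topology

abbrev Baire : Type := ℕ → ℕ

/-- The pairing `⟨p,q⟩(2n) = p(n)`, `⟨p,q⟩(2n+1) = q(n)`. -/
def pairB (p q : Baire) : Baire := fun n => if n % 2 = 0 then p (n / 2) else q (n / 2)

/-- A problem: a partial multivalued function on Baire space. -/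
structure Problem where
  dom : Set Baire
  sol : Baire → Set Baire

/-- Continuous Weihrauch reducibility. -/
def WRed (f g : Problem) : Prop :=
  ∃ (Kd Hd : Set Baire) (K H : Baire → Baire),
    ContinuousOn K Kd ∧ ContinuousOn H Hd ∧
      ∀ p ∈ f.dom, p ∈ Kd ∧ K p ∈ g.dom ∧
        ∀ q ∈ g.sol (K p), pairB p q ∈ Hd ∧ H (pairB p q) ∈ f.sol p

/-- Strong continuous Weihrauch reducibility. -/
def SWRed (f g : Problem) : Prop :=
  ∃ (Kd Hd : Set Baire) (K H : Baire → Baire),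
    ContinuousOn K Kd ∧ ContinuousOn H Hd ∧
      ∀ p ∈ f.dom, p ∈ Kd ∧ K p ∈ g.dom ∧
        ∀ q ∈ g.sol (K p), q ∈ Hd ∧ H q ∈ f.sol p

def WEquiv (f g : Problem) : Prop := WRed f g ∧ WRed g f
def SWEquiv (f g : Problem) : Prop := SWRed f g ∧ SWRed g f
def WLt (f g : Problem) : Prop := WRed f g ∧ ¬ WRed g f

/-- `range(p-1)`. -/
def rangeM (p : Baire) : Set ℕ := {n | ∃ i, p i = n + 1}

/-- Characteristic function of a set of naturals. -/
noncomputable def chi (A : Set ℕ) : Baire := A.indicator fun _ => 1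

noncomputable def EC : Problem where
  dom := Set.univ
  sol := fun p => {chi (rangeM p)}

noncomputable def EC1 : Problem where
  dom := {p | ((rangeM p)ᶜ).encard ≤ 1}
  sol := fun p => {chi (rangeM p)}

def pfst (r : Baire) : Baire := fun n => r (2 * n)
def psnd (r : Baire) : Baire := fun n => r (2 * n + 1)

noncomputable def SEP : Problem where
  dom := {r | rangeM (pfst r) ∩ rangeM (psnd r) = ∅}
  sol := fun r =>
    {s | ∃ A : Set ℕ, s = chi A ∧ rangeM (pfst r) ⊆ A ∧ A ⊆ (rangeM (psnd r))ᶜ}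

noncomputable def SEP1 : Problem where
  dom := {r | rangeM (pfst r) ∩ rangeM (psnd r) = ∅ ∧
    ((rangeM (pfst r) ∪ rangeM (psnd r))ᶜ).encard ≤ 1}
  sol := SEP.sol

/- rationals -/
def ratEnum (i : ℕ) : ℚ :=
  ((i.unpair.1 : ℚ) - (i.unpair.2.unpair.1 : ℚ)) / ((i.unpair.2.unpair.2 : ℚ) + 1)

def rhoCauchy (p : Baire) (x : ℝ) : Prop :=
  ∀ n, |(ratEnum (p n) : ℝ) - x| ≤ (2 : ℝ) ^ (-(n : ℤ))

def rhoNaive (p : Baire) (x : ℝ) : Prop :=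
  Tendsto (fun n => ((ratEnum (p n) : ℝ))) atTop (nhds x)

def rhoLt (p : Baire) (x : ℝ) : Prop := rangeM p = {n | (ratEnum n : ℝ) < x}
def rhoGt (p : Baire) (x : ℝ) : Prop := rangeM p = {n | x < (ratEnum n : ℝ)}

def rhoCfLt (p : Baire) (x : ℝ) : Prop :=
  (∀ n, p n ≤ 1) ∧ ∀ n, (p n = 1 ↔ (ratEnum n : ℝ) < x)
def rhoCfGt (p : Baire) (x : ℝ) : Prop :=
  (∀ n, p n ≤ 1) ∧ ∀ n, (p n = 1 ↔ x < (ratEnum n : ℝ))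

noncomputable def cfTail : List ℕ → ℝ
  | [] => 0
  | b :: l => 1 / ((b : ℝ) + cfTail l)

noncomputable def cfApprox (p : Baire) (k : ℕ) : ℝ :=
  ((Denumerable.ofNat ℤ (p 0) : ℤ) : ℝ) + cfTail ((List.range k).map fun i => p (i + 1))

def rhoCf (p : Baire) (x : ℝ) : Prop :=
  ((∀ i, 1 ≤ i → 1 ≤ p i) ∧ Tendsto (cfApprox p) atTop (nhds x)) ∨
    (∃ k, 1 ≤ k ∧ p k = 0 ∧ (∀ i, 1 ≤ i → i < k → 1 ≤ p i) ∧
      (2 ≤ k → 2 ≤ p (k - 1)) ∧ x = cfApprox p (k - 1))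

def rhoDec (p : Baire) (x : ℝ) : Prop :=
  (∀ n, 1 ≤ n → p n ≤ 9) ∧
    x = ((Denumerable.ofNat ℤ (p 0) : ℤ) : ℝ) + ∑' n : ℕ, (p (n + 1) : ℝ) / 10 ^ (n + 1)

/-- The implication problem between two representations of ℝ. -/
def implProblem (d1 d2 : Baire → ℝ → Prop) : Problem where
  dom := {p | ∃ x, d1 p x}
  sol := fun p => {q | ∃ x, d1 p x ∧ d2 q x}

/- trees / WKL / choice on Cantor space -/
def wordCode : List Bool → ℕ
  | [] => 0
  | b :: w => 2 * wordCode w + (if b then 2 else 1)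

def prefixList (x : Baire) (k : ℕ) : List Bool := (List.range k).map fun i => decide (x i = 1)

def isTreeCode (t : Baire) : Prop :=
  (∀ n, t n ≤ 1) ∧
    ∀ w v : List Bool, w <+: v → t (wordCode v) = 1 → t (wordCode w) = 1

def WKL : Problem where
  dom := {t | isTreeCode t ∧ {w : List Bool | t (wordCode w) = 1}.Infinite}
  sol := fun t => {x | (∀ n, x n ≤ 1) ∧ ∀ k, t (wordCode (prefixList x k)) = 1}

def Ap (p : Baire) : Set Baire :=
  {x | (∀ n, x n ≤ 1) ∧ ∀ k, wordCode (prefixList x k) ∉ rangeM p}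

def CCantor : Problem where
  dom := {p | (Ap p).Nonempty}
  sol := Ap

def Cle2 : Problem where
  dom := {p | (Ap p).Nonempty ∧ (Ap p).encard ≤ 2}
  sol := Ap

/- limit and parallelization -/
def projCount (r : Baire) (n : ℕ) : Baire := fun k => r (Nat.pair n k)

def limP : Problem where
  dom := {r | ∃ q : Baire, ∀ k, Tendsto (fun n => projCount r n k) atTop (nhds (q k))}
  sol := fun r => {q | ∀ k, Tendsto (fun n => projCount r n k) atTop (nhds (q k))}

def parallel (f : Problem) : Problem where
  dom := {r | ∀ n, projCount r n ∈ f.dom}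
  sol := fun r => {s | ∀ n, projCount s n ∈ f.sol (projCount r n)}

def MCT : Problem where
  dom := {r | ∃ xs : ℕ → ℝ, (∀ n, rhoCauchy (projCount r n) (xs n)) ∧
    Monotone xs ∧ BddAbove (Set.range xs)}
  sol := fun r => {q | ∃ xs : ℕ → ℝ, (∀ n, rhoCauchy (projCount r n) (xs n)) ∧
    Monotone xs ∧ BddAbove (Set.range xs) ∧ rhoCauchy q (⨆ n, xs n)}

/- SORT and RAT -/
open Classical in
noncomputable def sortOut (p : Baire) : Baire := fun k =>
  if {i | p i = 0}.Infinite then 0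
  else if k < {i | p i = 0}.ncard then 0 else 1

noncomputable def SORT : Problem where
  dom := {p | ∀ n, p n ≤ 1}
  sol := fun p => {sortOut p}

def znk (n : ℕ) : Baire := fun k => if k < n then 0 else 1

def RAT : Problem where
  dom := {p | ∃ x, rhoCauchy p x}
  sol := fun p => {s | ∃ x, rhoCauchy p x ∧
    ((∃ n, x = (ratEnum n : ℝ) ∧ s = znk n) ∨
      ((∀ r : ℚ, x ≠ (r : ℝ)) ∧ s = fun _ => 0))}

/- omniscience principles -/
def projFin (m i : ℕ) (r : Baire) : Baire := fun k => r (m * k + i - 1)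
def isZeroSeq (p : Baire) : Prop := ∀ k, p k = 0
def constSeq (i : ℕ) : Baire := fun _ => i

noncomputable def LPOn (n : ℕ) : Problem where
  dom := Set.univ
  sol := fun r => {constSeq ({i | 1 ≤ i ∧ i ≤ n ∧ isZeroSeq (projFin n i r)}.ncard)}

def LLPOn (n : ℕ) : Problem where
  dom := {r | {i | 1 ≤ i ∧ i ≤ n ∧ ¬ isZeroSeq (projFin n i r)}.encard ≤ 1}
  sol := fun r => {s | ∃ i, 1 ≤ i ∧ i ≤ n ∧ isZeroSeq (projFin n i r) ∧ s = constSeq i}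

def MLPOn (n : ℕ) : Problem where
  dom := {r | ∃ i, 1 ≤ i ∧ i ≤ n ∧ isZeroSeq (projFin n i r)}
  sol := fun r => {s | ∃ i, 1 ≤ i ∧ i ≤ n ∧ isZeroSeq (projFin n i r) ∧ s = constSeq i}

def LPO : Problem where
  dom := Set.univ
  sol := fun p => {s | (isZeroSeq p ∧ s = constSeq 1) ∨ (¬ isZeroSeq p ∧ s = constSeq 0)}

/- choice problems on ℕ etc. -/
def Cfin (n : ℕ) : Problem where
  dom := {p | ∃ i, i < n ∧ i ∉ rangeM p}
  sol := fun p => {s | ∃ i, i < n ∧ i ∉ rangeM p ∧ s = constSeq i}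

def ACCfin (n : ℕ) : Problem where
  dom := {p | (∃ i, i < n ∧ i ∉ rangeM p) ∧ ({i | i < n} ∩ rangeM p).encard ≤ 1}
  sol := (Cfin n).sol

def CNat : Problem where
  dom := {p | ∃ i, i ∉ rangeM p}
  sol := fun p => {s | ∃ i, i ∉ rangeM p ∧ s = constSeq i}

/- differentiation -/
instance : Countable (AddMonoidAlgebra ℚ ℕ) :=
  AddMonoidAlgebra.coeff_injective.countable

instance : Countable (Polynomial ℚ) :=
  Polynomial.toFinsupp_injective.countable

noncomputable def polyEnum : ℕ → Polynomial ℚ :=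
  (exists_surjective_nat (Polynomial ℚ)).choose

noncomputable def polyFun (k : ℕ) : C(Set.Icc (0:ℝ) 1, ℝ) :=
  ⟨fun x => ((polyEnum k).map (algebraMap ℚ ℝ)).eval (x : ℝ),
   (((polyEnum k).map (algebraMap ℚ ℝ)).continuous).comp continuous_subtype_val⟩

noncomputable def deltaC (p : Baire) (f : C(Set.Icc (0:ℝ) 1, ℝ)) : Prop :=
  ∀ n, ‖f - polyFun (p n)‖ ≤ (2 : ℝ) ^ (-(n : ℤ))

def IsDerivOn (f g : C(Set.Icc (0:ℝ) 1, ℝ)) : Prop :=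
  ∀ x : Set.Icc (0:ℝ) 1,
    HasDerivWithinAt (Set.IccExtend (by norm_num : (0:ℝ) ≤ 1) f) (g x) (Set.Icc 0 1) (x : ℝ)

noncomputable def diffP : Problem where
  dom := {p | ∃ f g, deltaC p f ∧ IsDerivOn f g}
  sol := fun p => {q | ∃ f g, deltaC p f ∧ IsDerivOn f g ∧ deltaC q g}


/-! ### Auxiliary material for `lim_equiv_MCT` -/

section Aux

open Finset in
/-- A cylinder is a neighborhood. -/
lemma cylinder_mem_nhds (z : Baire) (N : ℕ) : {z' : Baire | ∀ i < N, z' i = z i} ∈ 𝓝 z := by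
  have : {z' : Baire | ∀ i < N, z' i = z i} = ⋂ i ∈ Finset.range N, (fun z' : Baire => z' i) ⁻¹' {z i} := by
    ext z'; simp [Set.mem_iInter]
  rw [this]
  refine (isOpen_biInter_finset ?_).mem_nhds ?_
  · intro i _
    exact (continuous_apply i).isOpen_preimage _ (isOpen_discrete _)
  · simp

/-- Locally determined maps (into ℕ) are continuous on a set. -/
lemma contOn_of_fin_dep (f : Baire → ℕ) (s : Set Baire)
    (h : ∀ z ∈ s, ∃ N, ∀ z' ∈ s, (∀ i < N, z' i = z i) → f z' = f z) :
    ContinuousOn f s := by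
  intro z hz
  obtain ⟨N, hN⟩ := h z hz
  have hcy : {z' : Baire | ∀ i < N, z' i = z i} ∈ 𝓝[s] z :=
    nhdsWithin_le_nhds (cylinder_mem_nhds z N)
  have hev : ∀ᶠ z' in 𝓝[s] z, f z' = f z := by
    filter_upwards [hcy, self_mem_nhdsWithin] with z' hz' hz's
    exact hN z' hz's hz'
  exact Tendsto.congr' (hev.mono fun a ha => ha.symm) tendsto_const_nhds

lemma tendsto_ev_eq {f : ℕ → ℕ} {c : ℕ} (h : Tendsto f atTop (𝓝 c)) :
    ∀ᶠ n in atTop, f n = c := by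
  have := h ((isOpen_discrete {c}).mem_nhds rfl)
  simpa [Set.preimage, Filter.Eventually] using this

lemma tendsto_of_ev_eq {f : ℕ → ℕ} {c : ℕ} (h : ∀ᶠ n in atTop, f n = c) :
    Tendsto f atTop (𝓝 c) :=
  Tendsto.congr' (by filter_upwards [h] with n hn using hn.symm) tendsto_const_nhds

/-- A monotone bounded sequence of naturals is eventually constant. -/
lemma nat_mono_bdd_ev_const {c : ℕ → ℕ} (hm : Monotone c) {B : ℕ} (hb : ∀ n, c n ≤ B) :
    ∃ N, ∀ n, N ≤ n → c n = c N := by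
  have hne : (Set.range c).Nonempty := ⟨c 0, ⟨0, rfl⟩⟩
  have hbdd : BddAbove (Set.range c) := ⟨B, by rintro x ⟨n, rfl⟩; exact hb n⟩
  obtain ⟨N, hN⟩ := Nat.sSup_mem hne hbdd
  refine ⟨N, fun n hn => le_antisymm ?_ (hm hn)⟩
  calc c n ≤ sSup (Set.range c) := le_csSup hbdd ⟨n, rfl⟩
    _ = c N := hN.symm

lemma pfst_pairB (p q : Baire) : pfst (pairB p q) = p := by
  funext n; simp [pfst, pairB, Nat.mul_div_cancel_left]

lemma psnd_pairB (p q : Baire) : psnd (pairB p q) = q := by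
  funext n
  have h1 : (2 * n + 1) % 2 = 1 := by omega
  have h2 : (2 * n + 1) / 2 = n := by omega
  simp [psnd, pairB, h1, h2]

/-- Names determine reals uniquely. -/
lemma rhoCauchy_unique {p : Baire} {x y : ℝ} (hx : rhoCauchy p x) (hy : rhoCauchy p y) :
    x = y := by
  have h : ∀ n : ℕ, |x - y| ≤ 2 * (1/2)^n := by
    intro n
    have h1 := hx n
    have h2 := hy n
    have : (2:ℝ) ^ (-(n:ℤ)) = (1/2)^n := by
      rw [zpow_neg, zpow_natCast]; simp [inv_pow]
    rw [this] at h1 h2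
    calc |x - y| = |(x - (ratEnum (p n) : ℝ)) + ((ratEnum (p n) : ℝ) - y)| := by ring_nf
      _ ≤ |x - (ratEnum (p n) : ℝ)| + |(ratEnum (p n) : ℝ) - y| := abs_add_le _ _
      _ ≤ (1/2)^n + (1/2)^n := by rw [abs_sub_comm]; exact add_le_add h1 h2
      _ = 2 * (1/2)^n := by ring
  have hlim : Tendsto (fun n : ℕ => 2 * ((1:ℝ)/2)^n) atTop (𝓝 0) := by
    simpa using (tendsto_pow_atTop_nhds_zero_of_lt_one (by norm_num : (0:ℝ) ≤ 1/2)
      (by norm_num : (1:ℝ)/2 < 1)).const_mul 2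
  have : |x - y| ≤ 0 := ge_of_tendsto hlim (Filter.Eventually.of_forall fun n => (h n))
  have := abs_nonpos_iff.mp this
  linarith [sub_eq_zero.mp this]

/-- Encoding of a rational as a `ratEnum`-index. -/
def ratCode (s : ℚ) : ℕ :=
  Nat.pair s.num.toNat (Nat.pair (-s.num).toNat (s.den - 1))

lemma ratEnum_ratCode (s : ℚ) : ratEnum (ratCode s) = s := by
  unfold ratEnum ratCode
  simp only [Nat.unpair_pair]
  have hden : ((s.den - 1 : ℕ) : ℚ) + 1 = (s.den : ℚ) := by
    have := s.den_pos
    push_cast [Nat.cast_sub (by omega : 1 ≤ s.den)]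
    ring
  rw [hden]
  have hz : (s.num.toNat : ℤ) - ((-s.num).toNat : ℤ) = s.num := by omega
  have hnum : ((s.num.toNat : ℚ)) - (((-s.num).toNat : ℚ)) = (s.num : ℚ) := by
    have := congrArg (fun t : ℤ => (t : ℚ)) hz
    push_cast at this
    exact this
  rw [hnum]
  exact_mod_cast Rat.num_div_den s

lemma rhoCauchy_const (s : ℚ) : rhoCauchy (fun _ => ratCode s) (s : ℝ) := by
  intro n
  simp only [ratEnum_ratCode, sub_self, abs_zero]
  positivity

end Aux


/-! ### Direction 2: `MCT ≤ lim` -/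

section Dir2

lemma two_zpow_eq (n : ℕ) : (2:ℝ) ^ (-(n:ℤ)) = (1/2) ^ n := by
  rw [zpow_neg, zpow_natCast, one_div, inv_pow]

lemma continuous_psnd : Continuous psnd :=
  continuous_pi fun n => continuous_apply (2*n+1)

/-- `a_m` for coordinate `k`: the rational named at precision `k+2` by the `m`-th column. -/
def colA (r : Baire) (k m : ℕ) : ℚ := ratEnum (r (Nat.pair m (k+2)))

/-- The "last progress stage" function. -/
def sigma (r : Baire) (k : ℕ) : ℕ → ℕ
  | 0 => 0
  | n+1 => if colA r k (sigma r k n) + (1/2)^(k+1) < colA r k (n+1) then n+1 else sigma r k n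

lemma sigma_zero (r : Baire) (k : ℕ) : sigma r k 0 = 0 := rfl

lemma sigma_succ (r : Baire) (k n : ℕ) :
    sigma r k (n+1) =
      if colA r k (sigma r k n) + (1/2)^(k+1) < colA r k (n+1) then n+1 else sigma r k n := rfl

/-- The inner reduction for `MCT ≤ lim`. -/
def Kmct (r : Baire) : Baire := fun i =>
  r (Nat.pair (sigma r (Nat.unpair i).2 (Nat.unpair i).1) ((Nat.unpair i).2 + 2))

lemma sigma_le (r : Baire) (k : ℕ) : ∀ n, sigma r k n ≤ n
  | 0 => le_refl 0
  | n+1 => by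
      rw [sigma_succ]
      split
      · exact le_refl _
      · exact (sigma_le r k n).trans (Nat.le_succ n)

/-- Number of progress stages below `n`. -/
def tcnt (r : Baire) (k n : ℕ) : ℕ :=
  ((Finset.range n).filter (fun j => sigma r k (j+1) ≠ sigma r k j)).card

lemma tcnt_mono (r : Baire) (k : ℕ) : Monotone (tcnt r k) := fun a b hab =>
  Finset.card_le_card (Finset.filter_subset_filter _ (Finset.range_subset_range.2 hab))

lemma tcnt_succ_of_ne {r : Baire} {k n : ℕ} (h : sigma r k (n+1) ≠ sigma r k n) :
    tcnt r k (n+1) = tcnt r k n + 1 := by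
  unfold tcnt
  rw [Finset.range_add_one, Finset.filter_insert, if_pos h, Finset.card_insert_of_notMem]
  simp

lemma tcnt_succ_of_eq {r : Baire} {k n : ℕ} (h : sigma r k (n+1) = sigma r k n) :
    tcnt r k (n+1) = tcnt r k n := by
  unfold tcnt
  rw [Finset.range_add_one, Finset.filter_insert, if_neg (by simp [h])]

lemma colA_growth (r : Baire) (k : ℕ) :
    ∀ n, colA r k 0 + tcnt r k n * (1/2)^(k+1) ≤ colA r k (sigma r k n)
  | 0 => by simp [tcnt, sigma]
  | n+1 => by
    have ih := colA_growth r k n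
    by_cases h : colA r k (sigma r k n) + (1/2)^(k+1) < colA r k (n+1)
    · have hs : sigma r k (n+1) = n+1 := by rw [sigma_succ, if_pos h]
      have hne : sigma r k (n+1) ≠ sigma r k n := by
        rw [hs]; have := sigma_le r k n; omega
      rw [tcnt_succ_of_ne hne, hs]
      push_cast
      linarith
    · have hs : sigma r k (n+1) = sigma r k n := by rw [sigma_succ, if_neg h]
      rw [tcnt_succ_of_eq hs, hs]
      exact ih

lemma colA_close {r : Baire} {xs : ℕ → ℝ}
    (hname : ∀ n, rhoCauchy (projCount r n) (xs n)) (k m : ℕ) :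
    |((colA r k m : ℝ)) - xs m| ≤ (1/2)^(k+2) := by
  have h := hname m (k+2)
  rw [two_zpow_eq] at h
  exact h

lemma sigma_stab {r : Baire} {xs : ℕ → ℝ}
    (hname : ∀ n, rhoCauchy (projCount r n) (xs n)) (hmono : Monotone xs)
    (hbdd : BddAbove (Set.range xs)) (k : ℕ) :
    ∃ N, ∀ n, N ≤ n → sigma r k n = sigma r k N := by
  set y := ⨆ n, xs n with hy
  have hxsy : ∀ m, xs m ≤ y := fun m => le_ciSup hbdd m
  have hb : ∀ n, tcnt r k n ≤ ⌈(y + 1 - (colA r k 0 : ℝ)) * 2^(k+1)⌉₊ := by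
    intro n
    have h1 := (Rat.cast_le (K := ℝ)).mpr (colA_growth r k n)
    push_cast at h1
    have h2 : (colA r k (sigma r k n) : ℝ) ≤ y + 1 := by
      have ha := (abs_le.mp (colA_close hname k (sigma r k n))).2
      have hb2 := hxsy (sigma r k n)
      have hp : ((1:ℝ)/2)^(k+2) ≤ 1 :=
        pow_le_one₀ (by norm_num) (by norm_num)
      linarith
    have hpow : ((1:ℝ)/2)^(k+1) * 2^(k+1) = 1 := by
      rw [div_pow, one_pow]; field_simp
    have h3 : (tcnt r k n : ℝ) ≤ (y + 1 - colA r k 0) * 2^(k+1) := by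
      calc (tcnt r k n : ℝ) = (tcnt r k n * (1/2)^(k+1)) * 2^(k+1) := by
            rw [mul_assoc, hpow, mul_one]
        _ ≤ (y + 1 - colA r k 0) * 2^(k+1) := by
            apply mul_le_mul_of_nonneg_right (by linarith) (by positivity)
    exact_mod_cast h3.trans (Nat.le_ceil _)
  obtain ⟨N, hN⟩ := nat_mono_bdd_ev_const (tcnt_mono r k) hb
  refine ⟨N, fun n hn => ?_⟩
  induction n, hn using Nat.le_induction with
  | base => rfl
  | succ n hn ih =>
    by_cases h : sigma r k (n+1) = sigma r k n
    · rw [h]; exact ih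
    · have h1 := tcnt_succ_of_ne h
      have h2 := hN n hn
      have h3 := hN (n+1) (by omega)
      omega

lemma Kmct_col (r : Baire) (n k : ℕ) :
    projCount (Kmct r) n k = r (Nat.pair (sigma r k n) (k+2)) := by
  simp [projCount, Kmct, Nat.unpair_pair]

lemma sigma_agree {r r' : Baire} {k n : ℕ}
    (h : ∀ m, m ≤ n → r' (Nat.pair m (k+2)) = r (Nat.pair m (k+2))) :
    ∀ j, j ≤ n → sigma r' k j = sigma r k j := by
  intro j hj
  induction j with
  | zero => rfl
  | succ i ih =>
    have hi : sigma r' k i = sigma r k i := ih (by omega)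
    have hs := sigma_le r k i
    have e1 : colA r' k (sigma r' k i) = colA r k (sigma r k i) := by
      unfold colA; rw [hi, h _ (by omega)]
    have e2 : colA r' k (i+1) = colA r k (i+1) := by
      unfold colA; rw [h _ (by omega)]
    rw [sigma_succ, sigma_succ, e1, e2, hi]

lemma Kmct_continuousOn : ContinuousOn Kmct Set.univ := by
  rw [continuousOn_pi]
  intro i
  apply contOn_of_fin_dep
  intro z _
  refine ⟨((Finset.range (i.unpair.1 + 1)).sup (fun m => Nat.pair m (i.unpair.2 + 2))) + 1, ?_⟩
  intro z' _ hagree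
  have hsub : ∀ m, m ≤ i.unpair.1 →
      z' (Nat.pair m (i.unpair.2 + 2)) = z (Nat.pair m (i.unpair.2 + 2)) := by
    intro m hm
    have hmem : m ∈ Finset.range (i.unpair.1 + 1) := Finset.mem_range.2 (Nat.lt_succ_of_le hm)
    exact hagree _ (Nat.lt_succ_of_le (Finset.le_sup (f := fun m => Nat.pair m (i.unpair.2 + 2)) hmem))
  have hsig := sigma_agree hsub i.unpair.1 le_rfl
  show Kmct z' i = Kmct z i
  unfold Kmct
  rw [hsig, hsub _ (sigma_le z _ _)]

lemma red_MCT_lim : WRed MCT limP := by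
  refine ⟨Set.univ, Set.univ, Kmct, psnd, Kmct_continuousOn,
    continuous_psnd.continuousOn, ?_⟩
  intro r hr
  obtain ⟨xs, hname, hmono, hbdd⟩ := hr
  set y := ⨆ n, xs n with hy
  have hxsy : ∀ m, xs m ≤ y := fun m => le_ciSup hbdd m
  choose N hN using fun k => sigma_stab hname hmono hbdd k
  set q : Baire := fun k => r (Nat.pair (sigma r k (N k)) (k+2)) with hqdef
  have hcolq : ∀ k n, N k ≤ n → projCount (Kmct r) n k = q k := by
    intro k n hn
    rw [Kmct_col, hN k n hn]
  have htend : ∀ k, Tendsto (fun n => projCount (Kmct r) n k) atTop (𝓝 (q k)) := fun k =>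
    tendsto_of_ev_eq (Filter.eventually_atTop.2 ⟨N k, fun n hn => hcolq k n hn⟩)
  -- the Cauchy-name property of q
  have hqname : rhoCauchy q y := by
    intro k
    rw [two_zpow_eq]
    set M := sigma r k (N k) with hM
    have hqk : (ratEnum (q k) : ℝ) = (colA r k M : ℝ) := rfl
    rw [hqk]
    have hMle : M ≤ N k := sigma_le r k (N k)
    -- upper bound on colA M
    have hup : (colA r k M : ℝ) ≤ y + (1/2)^(k+2) := by
      have := (abs_le.mp (colA_close hname k M)).2
      have := hxsy M
      linarith [(abs_le.mp (colA_close hname k M)).2, hxsy M]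
    -- after N k there is no progress
    have hnoprog : ∀ n, N k ≤ n → colA r k (n+1) ≤ colA r k M + (1/2)^(k+1) := by
      intro n hn
      by_contra hcon
      push_neg at hcon
      have hσn : sigma r k n = M := by rw [hN k n hn]
      have hcond : colA r k (sigma r k n) + (1/2)^(k+1) < colA r k (n+1) := by
        rw [hσn]; exact hcon
      have h1 : sigma r k (n+1) = n+1 := by rw [sigma_succ, if_pos hcond]
      have h2 : sigma r k (n+1) = M := hN k (n+1) (by omega)
      omega
    -- xs is bounded by colA M plus errors
    have hxsb : ∀ m, xs m ≤ (colA r k M : ℝ) + (1/2)^(k+1) + (1/2)^(k+2) := by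
      intro m
      have key : ∀ n, N k ≤ n → xs (n+1) ≤ (colA r k M : ℝ) + (1/2)^(k+1) + (1/2)^(k+2) := by
        intro n hn
        have h1 := hnoprog n hn
        have h1' := (Rat.cast_le (K := ℝ)).mpr h1
        push_cast at h1'
        have h2 := (abs_le.mp (colA_close hname k (n+1))).1
        linarith
      have hm2 : xs m ≤ xs (max m (N k) + 1) := hmono (by omega)
      have := key (max m (N k)) (le_max_right _ _)
      linarith
    have hylb : y ≤ (colA r k M : ℝ) + (1/2)^(k+1) + (1/2)^(k+2) := ciSup_le hxsb
    have e1 : ((1:ℝ)/2)^(k+1) = (1/2)^k * (1/2) := pow_succ _ _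
    have e2 : ((1:ℝ)/2)^(k+2) = (1/2)^k * (1/2) * (1/2) := by
      rw [pow_succ, pow_succ]
    have hpk : (0:ℝ) < (1/2)^k := by positivity
    rw [abs_le]
    constructor
    · linarith
    · linarith
  refine ⟨trivial, ⟨q, htend⟩, ?_⟩
  intro q'' hq''
  have hq''q : q'' = q := funext fun k => tendsto_nhds_unique (hq'' k) (htend k)
  refine ⟨trivial, ?_⟩
  rw [psnd_pairB, hq''q]
  exact ⟨xs, hname, hmono, hbdd, hqname⟩

end Dir2


/-! ### Direction 1: `lim ≤ MCT` -/

section Dir1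

/-- Some column changes below `k` at stage `j`. -/
def chg (r : Baire) (j k : ℕ) : Prop :=
  ∃ k' ∈ Finset.range (k+1), r (Nat.pair (j+1) k') ≠ r (Nat.pair j k')

instance chg_dec (r : Baire) (j k : ℕ) : Decidable (chg r j k) := by
  unfold chg; infer_instance

/-- Number of change stages below `m`. -/
def cnt (r : Baire) (m k : ℕ) : ℕ := ((Finset.range m).filter (fun j => chg r j k)).card

lemma cnt_mono (r : Baire) (k : ℕ) {m m' : ℕ} (h : m ≤ m') : cnt r m k ≤ cnt r m' k :=
  Finset.card_le_card (Finset.filter_subset_filter _ (Finset.range_subset_range.2 h))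

/-- The monotone rational approximations. -/
def xq (r : Baire) (m : ℕ) : ℚ :=
  ∑ k ∈ Finset.range (m+1), (1 - (1/2)^(cnt r m k)) * (1/4)^k

lemma xterm_nonneg (r : Baire) (m k : ℕ) : (0:ℚ) ≤ (1 - (1/2)^(cnt r m k)) * (1/4)^k := by
  have h1 : ((1:ℚ)/2)^(cnt r m k) ≤ 1 := pow_le_one₀ (by norm_num) (by norm_num)
  have h2 : (0:ℚ) ≤ (1/4)^k := by positivity
  nlinarith

lemma xterm_mono (r : Baire) (k : ℕ) {m m' : ℕ} (h : m ≤ m') :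
    (1 - (1/2:ℚ)^(cnt r m k)) * (1/4)^k ≤ (1 - (1/2)^(cnt r m' k)) * (1/4)^k := by
  have h1 : ((1:ℚ)/2)^(cnt r m' k) ≤ (1/2)^(cnt r m k) :=
    pow_le_pow_of_le_one (by norm_num) (by norm_num) (cnt_mono r k h)
  have h2 : (0:ℚ) ≤ (1/4)^k := by positivity
  nlinarith

lemma xq_mono (r : Baire) : Monotone (xq r) := by
  intro m m' h
  unfold xq
  calc ∑ k ∈ Finset.range (m+1), (1 - (1/2:ℚ)^(cnt r m k)) * (1/4)^k
      ≤ ∑ k ∈ Finset.range (m+1), (1 - (1/2:ℚ)^(cnt r m' k)) * (1/4)^k :=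
        Finset.sum_le_sum fun k _ => xterm_mono r k h
    _ ≤ ∑ k ∈ Finset.range (m'+1), (1 - (1/2:ℚ)^(cnt r m' k)) * (1/4)^k :=
        Finset.sum_le_sum_of_subset_of_nonneg
          (Finset.range_subset_range.2 (by omega)) (fun k _ _ => xterm_nonneg r m' k)

lemma xq_le_two (r : Baire) (m : ℕ) : ((xq r m : ℝ)) ≤ 2 := by
  have h1 : xq r m ≤ ∑ k ∈ Finset.range (m+1), ((1:ℚ)/2)^k := by
    apply Finset.sum_le_sum
    intro k _
    have h2 : ((1:ℚ)/4)^k ≤ (1/2)^k := by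
      apply pow_le_pow_left₀ (by norm_num) (by norm_num)
    have h3 : (0:ℚ) < (1/2)^(cnt r m k) := by positivity
    have h4 : (0:ℚ) ≤ (1/4)^k := by positivity
    nlinarith
  have h1' := (Rat.cast_le (K := ℝ)).mpr h1
  push_cast at h1'
  calc ((xq r m : ℝ)) ≤ ∑ k ∈ Finset.range (m+1), ((1:ℝ)/2)^k := h1'
    _ ≤ 2 := sum_geometric_two_le _

lemma xq_diff (r : Baire) {m m' k : ℕ} (hk : k ≤ m) (hmm : m ≤ m') :
    ((1/2:ℚ)^(cnt r m k) - (1/2)^(cnt r m' k)) * (1/4)^k ≤ xq r m' - xq r m := by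
  have h1 : ∑ k' ∈ Finset.range (m+1), (1 - (1/2:ℚ)^(cnt r m' k')) * (1/4)^k' ≤ xq r m' :=
    Finset.sum_le_sum_of_subset_of_nonneg
      (Finset.range_subset_range.2 (by omega)) (fun k' _ _ => xterm_nonneg r m' k')
  have h2 : (1 - (1/2:ℚ)^(cnt r m' k)) * (1/4)^k - (1 - (1/2)^(cnt r m k)) * (1/4)^k ≤
      ∑ k' ∈ Finset.range (m+1),
        ((1 - (1/2:ℚ)^(cnt r m' k')) * (1/4)^k' - (1 - (1/2)^(cnt r m k')) * (1/4)^k') := by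
    apply Finset.single_le_sum (f := fun k' =>
      (1 - (1/2:ℚ)^(cnt r m' k')) * (1/4)^k' - (1 - (1/2)^(cnt r m k')) * (1/4)^k')
    · intro i _
      have := xterm_mono r i hmm
      linarith
    · exact Finset.mem_range.2 (by omega)
  rw [Finset.sum_sub_distrib] at h2
  unfold xq at h1 ⊢
  have : ((1/2:ℚ)^(cnt r m k) - (1/2)^(cnt r m' k)) * (1/4)^k =
      (1 - (1/2:ℚ)^(cnt r m' k)) * (1/4)^k - (1 - (1/2)^(cnt r m k)) * (1/4)^k := by ring
  rw [this]
  linarith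

lemma cnt_jump {r : Baire} {j k m : ℕ} (hmj : m ≤ j) (hchg : chg r j k) :
    cnt r m k + 1 ≤ cnt r (j+1) k := by
  have hsub : (Finset.range m).filter (fun j' => chg r j' k) ⊆
      (Finset.range (j+1)).filter (fun j' => chg r j' k) :=
    Finset.filter_subset_filter _ (Finset.range_subset_range.2 (by omega))
  have hj : j ∈ (Finset.range (j+1)).filter (fun j' => chg r j' k) :=
    Finset.mem_filter.2 ⟨Finset.mem_range.2 (by omega), hchg⟩
  have hjn : j ∉ (Finset.range m).filter (fun j' => chg r j' k) := by
    intro hmem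
    have := Finset.mem_range.1 (Finset.mem_filter.1 hmem).1
    omega
  exact Finset.card_lt_card ((Finset.ssubset_iff_of_subset hsub).2 ⟨j, hj, hjn⟩)

lemma xq_jump {r : Baire} {j k m : ℕ} (hk : k ≤ m) (hmj : m ≤ j) (hchg : chg r j k) :
    xq r m + (1/2)^(cnt r m k + 1) * (1/4)^k ≤ xq r (j+1) := by
  have hd := xq_diff r hk (show m ≤ j+1 by omega)
  have hcnt := cnt_jump hmj hchg
  have hpow : ((1:ℚ)/2)^(cnt r (j+1) k) ≤ (1/2)^(cnt r m k + 1) :=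
    pow_le_pow_of_le_one (by norm_num) (by norm_num) hcnt
  have he : ((1:ℚ)/2)^(cnt r m k + 1) = (1/2)^(cnt r m k) * (1/2) := pow_succ _ _
  have h4 : (0:ℚ) ≤ (1/4)^k := by positivity
  have hmul : ((1:ℚ)/2)^(cnt r m k + 1) * (1/4)^k ≤
      ((1/2:ℚ)^(cnt r m k) - (1/2)^(cnt r (j+1) k)) * (1/4)^k := by
    apply mul_le_mul_of_nonneg_right _ h4
    linarith
  linarith

lemma cnt_stable {r : Baire} {M k : ℕ} (hstab : ∀ j, M ≤ j → ¬ chg r j k) :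
    ∀ m, M ≤ m → cnt r m k = cnt r M k := by
  intro m hm
  induction m, hm using Nat.le_induction with
  | base => rfl
  | succ n hn ih =>
    have hstep : cnt r (n+1) k = cnt r n k := by
      unfold cnt
      rw [Finset.range_add_one, Finset.filter_insert, if_neg (hstab n hn)]
    rw [hstep, ih]

lemma col_stable {r : Baire} {m₀ k : ℕ} (hnochg : ∀ j, m₀ ≤ j → ¬ chg r j k) :
    ∀ j, m₀ ≤ j → r (Nat.pair j k) = r (Nat.pair m₀ k) := by
  intro j hj
  induction j, hj using Nat.le_induction with
  | base => rfl
  | succ n hn ih =>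
    have h := hnochg n hn
    unfold chg at h
    push_neg at h
    rw [h k (Finset.mem_range.2 (by omega)), ih]

/-- The inner reduction for `lim ≤ MCT`. -/
noncomputable def Klim (r : Baire) : Baire := fun i => ratCode (xq r (Nat.unpair i).1)

/-- The search predicate for the outer reduction. -/
def Plim (z : Baire) (k c : ℕ) : Prop :=
  k ≤ (Nat.unpair c).1 ∧
    ratEnum (psnd z (Nat.unpair c).2) + (1/2)^(Nat.unpair c).2 <
      xq (pfst z) (Nat.unpair c).1 +
        (1/2)^(cnt (pfst z) (Nat.unpair c).1 k + 1) * (1/4)^k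

instance Plim_dec (z : Baire) (k c : ℕ) : Decidable (Plim z k c) := by
  unfold Plim; infer_instance

noncomputable instance Plim_ex_dec (z : Baire) (k : ℕ) : Decidable (∃ c, Plim z k c) :=
  Classical.dec _

/-- The outer reduction for `lim ≤ MCT`. -/
noncomputable def Hlim (z : Baire) : Baire := fun k =>
  if h : ∃ c, Plim z k c then pfst z (Nat.pair (Nat.unpair (Nat.find h)).1 k) else 0

def HdLim : Set Baire := {z | ∀ k, ∃ c, Plim z k c}

lemma Klim_col (r : Baire) (n : ℕ) :
    projCount (Klim r) n = fun _ => ratCode (xq r n) := by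
  funext k
  simp [projCount, Klim, Nat.unpair_pair]

lemma Klim_mem_dom (r : Baire) : Klim r ∈ MCT.dom := by
  refine ⟨fun n => ((xq r n : ℝ)), ?_, ?_, ?_⟩
  · intro n
    rw [Klim_col]
    exact rhoCauchy_const (xq r n)
  · intro a b hab
    exact (Rat.cast_le (K := ℝ)).mpr (xq_mono r hab)
  · exact ⟨2, by rintro x ⟨n, rfl⟩; exact xq_le_two r n⟩

/-- Any solution of `MCT` on `Klim r` is a name of `⨆ n, xq r n`. -/
lemma MCT_sol_Klim {r : Baire} {q' : Baire} (h : q' ∈ MCT.sol (Klim r)) :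
    rhoCauchy q' (⨆ n, ((xq r n : ℝ))) := by
  obtain ⟨xs', h1, _, _, h4⟩ := h
  have hxs' : xs' = fun n => ((xq r n : ℝ)) := by
    funext n
    have ha := h1 n
    rw [Klim_col] at ha
    exact rhoCauchy_unique ha (rhoCauchy_const (xq r n))
  rw [hxs'] at h4
  exact h4

/- agreement lemmas -/

lemma chg_agree {r r' : Baire} {m j k' : ℕ}
    (h : ∀ a b, a ≤ m → b ≤ m → r' (Nat.pair a b) = r (Nat.pair a b))
    (hj : j + 1 ≤ m) (hk : k' ≤ m) : chg r' j k' = chg r j k' := by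
  unfold chg
  apply propext
  constructor <;> rintro ⟨k'', hk'', hne⟩ <;> refine ⟨k'', hk'', ?_⟩ <;>
    rw [Finset.mem_range] at hk''
  · rw [← h (j+1) k'' (by omega) (by omega), ← h j k'' (by omega) (by omega)]
    exact hne
  · rw [h (j+1) k'' (by omega) (by omega), h j k'' (by omega) (by omega)]
    exact hne

lemma cnt_agree {r r' : Baire} {m m' k' : ℕ}
    (h : ∀ a b, a ≤ m → b ≤ m → r' (Nat.pair a b) = r (Nat.pair a b))
    (hm' : m' ≤ m) (hk : k' ≤ m) : cnt r' m' k' = cnt r m' k' := by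
  unfold cnt
  congr 1
  ext j
  simp only [Finset.mem_filter, Finset.mem_range]
  refine and_congr_right fun hj => ?_
  rw [chg_agree h (by omega) hk]

lemma xq_agree {r r' : Baire} {m m' : ℕ}
    (h : ∀ a b, a ≤ m → b ≤ m → r' (Nat.pair a b) = r (Nat.pair a b))
    (hm' : m' ≤ m) : xq r' m' = xq r m' := by
  unfold xq
  apply Finset.sum_congr rfl
  intro k' hk'
  rw [Finset.mem_range] at hk'
  rw [cnt_agree h hm' (by omega)]

lemma Klim_continuousOn : ContinuousOn Klim Set.univ := by
  rw [continuousOn_pi]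
  intro i
  apply contOn_of_fin_dep
  intro z _
  refine ⟨((Finset.range (i.unpair.1 + 1) ×ˢ Finset.range (i.unpair.1 + 1)).sup
    (fun ab => Nat.pair ab.1 ab.2)) + 1, ?_⟩
  intro z' _ hagree
  show Klim z' i = Klim z i
  unfold Klim
  rw [xq_agree (m := i.unpair.1) ?_ le_rfl]
  intro a b ha hb
  apply hagree
  have hmem : (a, b) ∈ Finset.range (i.unpair.1 + 1) ×ˢ Finset.range (i.unpair.1 + 1) :=
    Finset.mem_product.2 ⟨Finset.mem_range.2 (by omega), Finset.mem_range.2 (by omega)⟩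
  have h2 : Nat.pair a b ≤ (Finset.range (i.unpair.1 + 1) ×ˢ Finset.range (i.unpair.1 + 1)).sup
      (fun ab => Nat.pair ab.1 ab.2) := by
    simpa using Finset.le_sup (f := fun ab : ℕ × ℕ => Nat.pair ab.1 ab.2) hmem
  omega

/-- Dependency bound for `Plim z k c` in `z`. -/
def depBound (c : ℕ) : ℕ :=
  2 * ((Finset.range ((Nat.unpair c).1 + 1) ×ˢ Finset.range ((Nat.unpair c).1 + 1)).sup
    (fun ab => Nat.pair ab.1 ab.2)) + 2 * (Nat.unpair c).2 + 2

lemma Plim_agree {z z' : Baire} {k c : ℕ}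
    (h : ∀ i, i < depBound c → z' i = z i) : Plim z' k c = Plim z k c := by
  set m := (Nat.unpair c).1 with hm
  set n := (Nat.unpair c).2 with hn
  have hpsnd : psnd z' n = psnd z n := by
    show z' (2*n+1) = z (2*n+1)
    apply h
    unfold depBound
    omega
  have hpfst : ∀ a b, a ≤ m → b ≤ m → pfst z' (Nat.pair a b) = pfst z (Nat.pair a b) := by
    intro a b ha hb
    show z' (2 * Nat.pair a b) = z (2 * Nat.pair a b)
    apply h
    have hmem : (a, b) ∈ Finset.range (m + 1) ×ˢ Finset.range (m + 1) :=
      Finset.mem_product.2 ⟨Finset.mem_range.2 (by omega), Finset.mem_range.2 (by omega)⟩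
    have h2 : Nat.pair a b ≤ (Finset.range (m + 1) ×ˢ Finset.range (m + 1)).sup
        (fun ab => Nat.pair ab.1 ab.2) := by
      simpa using Finset.le_sup (f := fun ab : ℕ × ℕ => Nat.pair ab.1 ab.2) hmem
    unfold depBound
    rw [← hm, ← hn]
    omega
  unfold Plim
  rw [← hm, ← hn, hpsnd]
  by_cases hkm : k ≤ m
  · rw [xq_agree hpfst le_rfl, cnt_agree hpfst le_rfl hkm]
  · apply propext
    constructor <;> rintro ⟨h1, -⟩ <;> exact absurd h1 hkm

lemma Hlim_continuousOn : ContinuousOn Hlim HdLim := by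
  rw [continuousOn_pi]
  intro k
  apply contOn_of_fin_dep
  intro z hz
  have hk := hz k
  refine ⟨((Finset.range (Nat.find hk + 1)).sup depBound) +
    2 * Nat.pair (Nat.unpair (Nat.find hk)).1 k + 2, ?_⟩
  intro z' hz' hagree
  have hiff : ∀ c, c ≤ Nat.find hk → (Plim z' k c ↔ Plim z k c) := by
    intro c hc
    rw [Plim_agree (fun i hi => hagree i ?_)]
    have : depBound c ≤ (Finset.range (Nat.find hk + 1)).sup depBound :=
      Finset.le_sup (Finset.mem_range.2 (by omega))
    omega
  have hk' := hz' k
  have hfind : Nat.find hk' = Nat.find hk := by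
    rw [Nat.find_eq_iff]
    exact ⟨(hiff _ le_rfl).2 (Nat.find_spec hk),
      fun c hc => (hiff c (by omega)).not.2 (Nat.find_min hk hc)⟩
  show Hlim z' k = Hlim z k
  unfold Hlim
  rw [dif_pos hk', dif_pos hk, hfind]
  exact hagree _ (by omega)

set_option maxHeartbeats 2000000 in
lemma red_lim_MCT : WRed limP MCT := by
  refine ⟨Set.univ, HdLim, Klim, Hlim, Klim_continuousOn, Hlim_continuousOn, ?_⟩
  intro r hr
  obtain ⟨q₀, hq₀⟩ := hr
  refine ⟨trivial, Klim_mem_dom r, ?_⟩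
  intro q' hq'
  have hq'c : rhoCauchy q' (⨆ n, ((xq r n : ℝ))) := MCT_sol_Klim hq'
  set y := ⨆ n, ((xq r n : ℝ)) with hy
  have hbdd : BddAbove (Set.range (fun n => ((xq r n : ℝ)))) :=
    ⟨2, by rintro x ⟨n, rfl⟩; exact xq_le_two r n⟩
  have hxsy : ∀ m, ((xq r m : ℝ)) ≤ y := fun m => le_ciSup hbdd m
  have htendy : Tendsto (fun n => ((xq r n : ℝ))) atTop (𝓝 y) :=
    tendsto_atTop_ciSup (fun a b hab => (Rat.cast_le (K := ℝ)).mpr (xq_mono r hab)) hbdd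
  -- settling stages
  have hsettle : ∀ k, ∃ M, (∀ j, M ≤ j → ¬ chg r j k) := by
    intro k
    have hev : ∀ᶠ n in atTop, ∀ k' ∈ Finset.range (k+1), r (Nat.pair n k') = q₀ k' := by
      rw [Filter.eventually_all_finset]
      intro k' _
      exact tendsto_ev_eq (hq₀ k')
    obtain ⟨M, hM⟩ := Filter.eventually_atTop.1 hev
    refine ⟨M, fun j hj hchg => ?_⟩
    obtain ⟨k', hk', hne⟩ := hchg
    exact hne (by rw [hM (j+1) (by omega) k' hk', hM j hj k' hk'])
  -- membership in HdLim
  have hmem : pairB r q' ∈ HdLim := by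
    intro k
    obtain ⟨M, hM⟩ := hsettle k
    set M' := max M k with hM'
    have hcntst : ∀ m, M' ≤ m → cnt r m k = cnt r M' k := by
      intro m hm
      rw [cnt_stable (fun j hj => hM j hj) m (by omega),
        cnt_stable (fun j hj => hM j hj) M' (by omega)]
    set δ : ℝ := (((1/2:ℚ)^(cnt r M' k + 1) * (1/4)^k : ℚ) : ℝ) with hδ
    have hδeq : δ = (1/2:ℝ)^(cnt r M' k + 1) * (1/4)^k := by
      rw [hδ]; push_cast; ring
    have hδpos : 0 < δ := by rw [hδeq]; positivity
    have hev1 : ∀ᶠ m in atTop, (y - δ/2 < ((xq r m : ℝ)) ∧ M' ≤ m) :=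
      (htendy.eventually (eventually_gt_nhds (show y - δ/2 < y by linarith))).and
        (Filter.eventually_ge_atTop M')
    obtain ⟨m, hm1, hm2⟩ := hev1.exists
    obtain ⟨n, hn⟩ : ∃ n : ℕ, ((1:ℝ)/2)^n < δ/4 :=
      exists_pow_lt_of_lt_one (by linarith) (by norm_num)
    refine ⟨Nat.pair m n, ?_⟩
    unfold Plim
    rw [Nat.unpair_pair, pfst_pairB, psnd_pairB]
    refine ⟨by omega, ?_⟩
    have hub : (ratEnum (q' n) : ℝ) - y ≤ (1/2)^n := by
      have h := hq'c n
      rw [two_zpow_eq] at h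
      exact (abs_le.mp h).2
    have hcnteq : cnt r m k = cnt r M' k := hcntst m hm2
    have hR : ((ratEnum (q' n) + (1/2:ℚ)^n : ℚ) : ℝ) <
        ((xq r m + (1/2:ℚ)^(cnt r m k + 1) * (1/4)^k : ℚ) : ℝ) := by
      push_cast
      rw [hcnteq, ← hδeq]
      linarith
    exact_mod_cast hR
  refine ⟨hmem, ?_⟩
  -- the output is the limit
  have hq'mem := hq'
  intro k
  have hk := hmem k
  set c₀ := Nat.find hk with hc₀
  have hspec := Nat.find_spec hk
  rw [← hc₀] at hspec
  unfold Plim at hspec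
  obtain ⟨hkm₀, hineq⟩ := hspec
  simp only [pfst_pairB, psnd_pairB] at hineq
  set m₀ := (Nat.unpair c₀).1 with hm₀
  set n₀ := (Nat.unpair c₀).2 with hn₀
  have hineqR := (Rat.cast_lt (K := ℝ)).mpr hineq
  push_cast at hineqR
  have hylt : y < ((xq r m₀ : ℝ)) + (1/2)^(cnt r m₀ k + 1) * (1/4)^k := by
    have hlb : -(1/2:ℝ)^n₀ ≤ (ratEnum (q' n₀) : ℝ) - y := by
      have h := hq'c n₀
      rw [two_zpow_eq] at h
      exact (abs_le.mp h).1
    linarith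
  have hnochg : ∀ j, m₀ ≤ j → ¬ chg r j k := by
    intro j hj hchg
    have hjump := xq_jump hkm₀ hj hchg
    have hcast := (Rat.cast_le (K := ℝ)).mpr hjump
    push_cast at hcast
    have := hxsy (j+1)
    linarith
  have hcol := col_stable hnochg
  have hHval : Hlim (pairB r q') k = r (Nat.pair m₀ k) := by
    unfold Hlim
    rw [dif_pos hk, ← hc₀, ← hm₀, pfst_pairB]
  rw [hHval]
  apply tendsto_of_ev_eq
  exact Filter.eventually_atTop.2
    ⟨m₀, fun j hj => by show r (Nat.pair j k) = _; rw [hcol j hj]⟩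

end Dir1

/-- `lim ≡_W MCT`. -/
theorem lim_equiv_MCT : WEquiv limP MCT := ⟨red_lim_MCT, red_MCT_lim⟩
end

section
/- For all n, k ≥ 1: MLPO_{n+1} <_W LPO_n, and LPO_k is not continuously Weihrauch reducible to MLPO_{n+1} (LPO_k ≰_W MLPO_{n+1}). -/
open Filter Topology

/-! ### Auxiliary material for `MLPO_vs_LPO` -/

section MLPOvsLPOAux

lemma pairB_even (p q : Baire) (j : ℕ) : pairB p q (2 * j) = p j := by
  simp [pairB, Nat.mul_mod_right, Nat.mul_div_cancel_left j (by norm_num : 0 < 2)]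

lemma pairB_odd (p q : Baire) (j : ℕ) : pairB p q (2 * j + 1) = q j := by
  have h1 : (2 * j + 1) % 2 = 1 := by omega
  have h2 : (2 * j + 1) / 2 = j := by omega
  simp [pairB, h1, h2]

lemma pairB_one (p q : Baire) : pairB p q 1 = q 0 := by
  simpa using pairB_odd p q 0

lemma cyl_open (x : Baire) (N : ℕ) : IsOpen {y : Baire | ∀ j, j < N → y j = x j} := by
  have h : {y : Baire | ∀ j, j < N → y j = x j}
      = ⋂ j ∈ Finset.range N, {y : Baire | y j = x j} := by
    ext y; simp [Finset.mem_range]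
  rw [h]
  refine isOpen_biInter_finset fun j _ => ?_
  have h2 : IsOpen ((fun y : Baire => y j) ⁻¹' {x j}) :=
    (isOpen_discrete _).preimage (continuous_apply j)
  exact h2

lemma cyl_mem_nhds {x : Baire} {s : Set Baire} (h : s ∈ 𝓝 x) :
    ∃ N, ∀ y : Baire, (∀ j, j < N → y j = x j) → y ∈ s := by
  obtain ⟨t, hts, hto, hxt⟩ := mem_nhds_iff.mp h
  obtain ⟨I, u, hu, hsub⟩ := isOpen_pi_iff.mp hto x hxt
  refine ⟨I.sup id + 1, fun y hy => hts (hsub ?_)⟩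
  intro i hi
  have hi' : i ∈ I := hi
  have hyi : y i = x i := hy i (Nat.lt_succ_of_le (Finset.le_sup (f := id) hi'))
  rw [hyi]; exact (hu i hi').2

/-- Embedding `a ↦ (a, 0, …, 0)` as an input to `LPO_k`. -/
def embA (k : ℕ) (a : Baire) : Baire := fun j => if j % k = 0 then a (j / k) else 0

lemma embA_continuous (k : ℕ) : Continuous (embA k) := by
  apply continuous_pi; intro j
  by_cases h : j % k = 0
  · simpa [embA, h] using continuous_apply (j / k)
  · simpa [embA, h] using (continuous_const : Continuous fun _ : Baire => (0 : ℕ))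

lemma embA_one (k : ℕ) (hk : 1 ≤ k) (a : Baire) : projFin k 1 (embA k a) = a := by
  funext j
  have h1 : k * j + 1 - 1 = k * j := by omega
  simp [projFin, h1, embA, Nat.mul_mod_right, Nat.mul_div_cancel_left j (by omega : 0 < k)]

lemma embA_hi (k : ℕ) (a : Baire) (i : ℕ) (h2 : 2 ≤ i) (hik : i ≤ k) :
    isZeroSeq (projFin k i (embA k a)) := by
  intro j
  have h1 : k * j + i - 1 = i - 1 + k * j := by omega
  have hmod : (i - 1 + k * j) % k = i - 1 := by
    rw [Nat.add_mul_mod_self_left]; exact Nat.mod_eq_of_lt (by omega)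
  show embA k a (k * j + i - 1) = 0
  rw [h1]
  show (if (i - 1 + k * j) % k = 0 then a ((i - 1 + k * j) / k) else 0) = 0
  rw [hmod, if_neg (by omega)]

lemma cnt_embA_zero (k : ℕ) (hk : 1 ≤ k) (a : Baire) (hz : isZeroSeq a) :
    {i | 1 ≤ i ∧ i ≤ k ∧ isZeroSeq (projFin k i (embA k a))}.ncard = k := by
  have hset : {i | 1 ≤ i ∧ i ≤ k ∧ isZeroSeq (projFin k i (embA k a))}
      = ↑(Finset.Icc 1 k) := by
    ext i
    simp only [Set.mem_setOf_eq, Finset.coe_Icc, Set.mem_Icc]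
    refine ⟨fun h => ⟨h.1, h.2.1⟩, fun h => ⟨h.1, h.2, ?_⟩⟩
    rcases Nat.lt_or_ge i 2 with h2 | h2
    · have hi1 : i = 1 := by omega
      subst hi1; rw [embA_one k hk a]; exact hz
    · exact embA_hi k a i h2 h.2
  rw [hset, Set.ncard_coe_finset, Nat.card_Icc]
  omega

lemma cnt_embA_nonzero (k : ℕ) (hk : 1 ≤ k) (a : Baire) (hz : ¬ isZeroSeq a) :
    {i | 1 ≤ i ∧ i ≤ k ∧ isZeroSeq (projFin k i (embA k a))}.ncard = k - 1 := by
  have hset : {i | 1 ≤ i ∧ i ≤ k ∧ isZeroSeq (projFin k i (embA k a))}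
      = ↑(Finset.Icc 2 k) := by
    ext i
    simp only [Set.mem_setOf_eq, Finset.coe_Icc, Set.mem_Icc]
    constructor
    · rintro ⟨h1, h2, h3⟩
      rcases Nat.lt_or_ge i 2 with hlt | hge
      · exfalso
        have hi1 : i = 1 := by omega
        subst hi1
        rw [embA_one k hk a] at h3
        exact hz h3
      · exact ⟨hge, h2⟩
    · rintro ⟨h1, h2⟩
      exact ⟨by omega, h2, embA_hi k a i h1 h2⟩
  rw [hset, Set.ncard_coe_finset, Nat.card_Icc]
  omega

/-- `LPO_k` is not continuously Weihrauch reducible to `MLPO_m`. -/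
lemma lpo_nred (m k : ℕ) (hm : 1 ≤ m) (hk : 1 ≤ k) : ¬ WRed (LPOn k) (MLPOn m) := by
  classical
  rintro ⟨Kd, Hd, K, H, hKc, hHc, hred⟩
  have hdom : ∀ p : Baire, p ∈ (LPOn k).dom := fun p => Set.mem_univ p
  have hKdom : ∀ a : Baire, K (embA k a) ∈ (MLPOn m).dom :=
    fun a => (hred _ (hdom _)).2.1
  have hH : ∀ a : Baire, ∀ i, 1 ≤ i → i ≤ m → isZeroSeq (projFin m i (K (embA k a))) →
      H (pairB (embA k a) (constSeq i))
        = constSeq ({i | 1 ≤ i ∧ i ≤ k ∧ isZeroSeq (projFin k i (embA k a))}.ncard) := by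
    intro a i h1 h2 hz
    have hq : constSeq i ∈ (MLPOn m).sol (K (embA k a)) := ⟨i, h1, h2, hz, rfl⟩
    exact ((hred _ (hdom (embA k a))).2.2 _ hq).2
  have hHd : ∀ a : Baire, ∀ i, 1 ≤ i → i ≤ m → isZeroSeq (projFin m i (K (embA k a))) →
      pairB (embA k a) (constSeq i) ∈ Hd := by
    intro a i h1 h2 hz
    exact ((hred _ (hdom (embA k a))).2.2 _ ⟨i, h1, h2, hz, rfl⟩).1
  have hKcont : Continuous fun a => K (embA k a) := by
    have hK : Continuous K := by
      rw [← continuousOn_univ]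
      exact hKc.mono fun x _ => (hred x (hdom x)).1
    exact hK.comp (embA_continuous k)
  have key : ∀ i : ℕ, ∃ N : ℕ, ∀ a : Baire, (∀ j, j < N → a j = 0) → 1 ≤ i → i ≤ m →
      isZeroSeq (projFin m i (K (embA k a))) → isZeroSeq a := by
    intro i
    by_cases hir : 1 ≤ i ∧ i ≤ m
    · obtain ⟨h1, h2⟩ := hir
      have hizz : isZeroSeq (fun _ => 0 : Baire) := fun _ => rfl
      by_cases h0 : isZeroSeq (projFin m i (K (embA k (fun _ => 0))))
      · -- `0̂` is in `S_i`; use continuity of `H` around it.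
        have hφc : Continuous fun a : Baire => pairB (embA k a) (constSeq i) := by
          apply continuous_pi; intro j
          by_cases hj : j % 2 = 0
          · simpa [pairB, hj] using (continuous_apply (j / 2)).comp' (embA_continuous k)
          · simpa [pairB, hj] using
              (continuous_const : Continuous fun _ : Baire => constSeq i (j / 2))
        have hmaps : Set.MapsTo (fun a : Baire => pairB (embA k a) (constSeq i))
            {a : Baire | isZeroSeq (projFin m i (K (embA k a)))} Hd :=
          fun a ha => hHd a i h1 h2 ha
        have hGc : ContinuousOn (H ∘ fun a : Baire => pairB (embA k a) (constSeq i))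
            {a : Baire | isZeroSeq (projFin m i (K (embA k a)))} :=
          hHc.comp hφc.continuousOn hmaps
        have hzS : (fun _ => 0 : Baire) ∈
            {a : Baire | isZeroSeq (projFin m i (K (embA k a)))} := h0
        have hten := (hGc _ hzS).tendsto
        have hVz : H (pairB (embA k (fun _ => 0)) (constSeq i)) 0 = k := by
          rw [hH (fun _ => 0) i h1 h2 h0]
          show ({i | 1 ≤ i ∧ i ≤ k ∧ isZeroSeq (projFin k i (embA k (fun _ => 0)))}).ncard = k
          exact cnt_embA_zero k hk _ hizz
        have hVopen : IsOpen {y : Baire | y 0 = k} := by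
          have h2o : IsOpen ((fun y : Baire => y 0) ⁻¹' {k}) :=
            (isOpen_discrete _).preimage (continuous_apply 0)
          exact h2o
        have hVmem : {y : Baire | y 0 = k} ∈
            𝓝 ((H ∘ fun a : Baire => pairB (embA k a) (constSeq i)) (fun _ => 0)) :=
          hVopen.mem_nhds hVz
        have hpre := hten hVmem
        obtain ⟨U, hUo, hzU, hUsub⟩ := mem_nhdsWithin.mp hpre
        obtain ⟨N, hN⟩ := cyl_mem_nhds (hUo.mem_nhds hzU)
        refine ⟨N, fun a ha _ _ haS => ?_⟩
        have haU : a ∈ U := hN a ha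
        have hval : H (pairB (embA k a) (constSeq i)) 0 = k := hUsub ⟨haU, haS⟩
        rw [hH a i h1 h2 haS] at hval
        have hval' : ({i | 1 ≤ i ∧ i ≤ k ∧ isZeroSeq (projFin k i (embA k a))}).ncard = k :=
          hval
        by_contra hnz
        rw [cnt_embA_nonzero k hk a hnz] at hval'
        omega
      · -- `0̂` is not in `S_i`; a finite prefix witnesses this.
        have hwit : ∃ t, projFin m i (K (embA k (fun _ => 0))) t ≠ 0 := by
          by_contra hc
          push_neg at hc
          exact h0 hc
        obtain ⟨t, ht⟩ := hwit
        have hcont : Continuous fun a : Baire => K (embA k a) (m * t + i - 1) :=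
          (continuous_apply (m * t + i - 1)).comp hKcont
        have hopen : IsOpen {a : Baire |
            K (embA k a) (m * t + i - 1) = K (embA k (fun _ => 0)) (m * t + i - 1)} := by
          have h2o : IsOpen ((fun a : Baire => K (embA k a) (m * t + i - 1)) ⁻¹'
              {K (embA k (fun _ => 0)) (m * t + i - 1)}) :=
            (isOpen_discrete _).preimage hcont
          exact h2o
        obtain ⟨N, hN⟩ := cyl_mem_nhds (hopen.mem_nhds rfl)
        refine ⟨N, fun a ha _ _ haS => ?_⟩
        exfalso
        have haU : K (embA k a) (m * t + i - 1)
            = K (embA k (fun _ => 0)) (m * t + i - 1) := hN a ha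
        have h5 : K (embA k a) (m * t + i - 1) = 0 := haS t
        rw [haU] at h5
        exact ht h5
    · exact ⟨0, fun a _ hi1 hi2 _ => absurd ⟨hi1, hi2⟩ hir⟩
  choose N hN using key
  set NN := (Finset.range (m + 1)).sup N with hNN
  have hanz : ¬ isZeroSeq (fun j => if j < NN then 0 else 1 : Baire) := by
    intro hzs
    have h := hzs NN
    simp only [lt_irrefl, if_false] at h
    exact one_ne_zero h
  obtain ⟨i, h1, h2, hzi⟩ := hKdom (fun j => if j < NN then 0 else 1)
  have hNi : N i ≤ NN :=
    Finset.le_sup (show i ∈ Finset.range (m + 1) by simp only [Finset.mem_range]; omega)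
  refine hanz (hN i _ (fun j hj => ?_) h1 h2 hzi)
  show (if j < NN then 0 else 1) = 0
  rw [if_pos (by omega)]

/-! The reduction `MLPO_{n+1} ≤_W LPO_n`. -/

/-- The forward functional: extract the first `n` of `n+1` interleaved columns. -/
def shrinkK (n : ℕ) (r : Baire) : Baire := fun j => r ((n + 1) * (j / n) + j % n)

lemma shrinkK_proj (n : ℕ) (hn : 1 ≤ n) (r : Baire) (i : ℕ) (h1 : 1 ≤ i) (h2 : i ≤ n) :
    projFin n i (shrinkK n r) = projFin (n + 1) i r := by
  funext j
  have h3 : n * j + i - 1 = (i - 1) + n * j := by omega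
  have hd : ((i - 1) + n * j) / n = j := by
    rw [Nat.add_mul_div_left _ _ (by omega : 0 < n), Nat.div_eq_of_lt (by omega : i - 1 < n)]
    omega
  have hmo : ((i - 1) + n * j) % n = i - 1 := by
    rw [Nat.add_mul_mod_self_left]; exact Nat.mod_eq_of_lt (by omega)
  show shrinkK n r (n * j + i - 1) = r ((n + 1) * j + i - 1)
  unfold shrinkK
  rw [h3, hd, hmo]
  congr 1
  omega

/-- The set of valid indices among the first `n` columns. -/
def Sset (n : ℕ) (r : Baire) : Set ℕ :=
  {i | 1 ≤ i ∧ i ≤ n ∧ isZeroSeq (projFin (n + 1) i r)}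

lemma Sset_finite (n : ℕ) (r : Baire) : (Sset n r).Finite :=
  (Set.finite_Icc 1 n).subset fun i hi => ⟨hi.1, hi.2.1⟩

lemma cntset_eq (n : ℕ) (hn : 1 ≤ n) (r : Baire) :
    {i | 1 ≤ i ∧ i ≤ n ∧ isZeroSeq (projFin n i (shrinkK n r))} = Sset n r := by
  ext i
  simp only [Set.mem_setOf_eq, Sset]
  constructor
  · rintro ⟨hh1, hh2, hh3⟩
    exact ⟨hh1, hh2, by rwa [shrinkK_proj n hn r i hh1 hh2] at hh3⟩
  · rintro ⟨hh1, hh2, hh3⟩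
    exact ⟨hh1, hh2, by rwa [shrinkK_proj n hn r i hh1 hh2]⟩

/-- The backward functional. -/
noncomputable def ansI (n : ℕ) (r : Baire) (c : ℕ) : ℕ :=
  if c = 0 then n + 1 else sInf (Sset n r)

noncomputable def Hfun (n : ℕ) : Baire → Baire := fun x => constSeq (ansI n (pfst x) (x 1))

/-- The domain on which `Hfun` is continuous. -/
def HdSet (n : ℕ) : Set Baire :=
  {x | ∃ r : Baire, (∃ i0, 1 ≤ i0 ∧ i0 ≤ n + 1 ∧ isZeroSeq (projFin (n + 1) i0 r)) ∧
    x = pairB r (constSeq (Sset n r).ncard)}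

lemma mlpo_red (n : ℕ) (hn : 1 ≤ n) : WRed (MLPOn (n + 1)) (LPOn n) := by
  classical
  refine ⟨Set.univ, HdSet n, shrinkK n, Hfun n, ?_, ?_, ?_⟩
  · exact (continuous_pi fun j => continuous_apply _).continuousOn
  · -- continuity of `Hfun` on `HdSet n`: it is locally constant there
    intro x hx
    obtain ⟨r, hdomr, rfl⟩ := hx
    set c := (Sset n r).ncard with hc
    have wit : ∀ i : ℕ, ∃ t, 1 ≤ i → i ≤ n → ¬ isZeroSeq (projFin (n + 1) i r) →
        projFin (n + 1) i r t ≠ 0 := by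
      intro i
      by_cases h : 1 ≤ i ∧ i ≤ n ∧ ¬ isZeroSeq (projFin (n + 1) i r)
      · obtain ⟨h1, h2, h3⟩ := h
        have hwit : ∃ t, projFin (n + 1) i r t ≠ 0 := by
          by_contra hcc; push_neg at hcc; exact h3 hcc
        obtain ⟨t, ht⟩ := hwit
        exact ⟨t, fun _ _ _ => ht⟩
      · exact ⟨0, fun hh1 hh2 hh3 => absurd ⟨hh1, hh2, hh3⟩ h⟩
    choose W hW using wit
    set N := 2 * ((Finset.range (n + 2)).sup fun i => (n + 1) * W i + i) + 2 with hNdef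
    have hUopen : IsOpen {y : Baire | ∀ j, j < N → y j = pairB r (constSeq c) j} :=
      cyl_open _ N
    have hxU : pairB r (constSeq c) ∈
        {y : Baire | ∀ j, j < N → y j = pairB r (constSeq c) j} := fun j _ => rfl
    have key : ∀ y ∈ {y : Baire | ∀ j, j < N → y j = pairB r (constSeq c) j} ∩ HdSet n,
        Hfun n y = Hfun n (pairB r (constSeq c)) := by
      rintro y ⟨hyU, r', hdomr', rfl⟩
      set c' := (Sset n r').ncard with hc'
      have h1lt : 1 < N := by omega
      have hcc : c' = c := by
        have h := hyU 1 h1lt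
        rw [pairB_one, pairB_one] at h
        exact h
      have hragree : ∀ j, 2 * j < N → r' j = r j := by
        intro j hj
        have h := hyU (2 * j) hj
        rw [pairB_even, pairB_even] at h
        exact h
      have hsub : Sset n r' ⊆ Sset n r := by
        rintro i ⟨hh1, hh2, hh3⟩
        refine ⟨hh1, hh2, ?_⟩
        by_contra hnz
        have hwit := hW i hh1 hh2 hnz
        have hcoord : (n + 1) * W i + i ≤
            (Finset.range (n + 2)).sup fun i => (n + 1) * W i + i :=
          Finset.le_sup (f := fun j => (n + 1) * W j + j)
            (show i ∈ Finset.range (n + 2) by simp only [Finset.mem_range]; omega)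
        have heqc : r' ((n + 1) * W i + i - 1) = r ((n + 1) * W i + i - 1) :=
          hragree _ (by omega)
        have hz' : r' ((n + 1) * W i + i - 1) = 0 := hh3 (W i)
        rw [heqc] at hz'
        exact hwit hz'
      have hSeq : Sset n r' = Sset n r :=
        Set.eq_of_subset_of_ncard_le hsub (by rw [← hc, ← hc', hcc]) (Sset_finite n r)
      have e1 : Hfun n (pairB r' (constSeq c')) = constSeq (ansI n r' c') := by
        simp [Hfun, pfst_pairB, pairB_one, constSeq]
      have e2 : Hfun n (pairB r (constSeq c)) = constSeq (ansI n r c) := by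
        simp [Hfun, pfst_pairB, pairB_one, constSeq]
      rw [e1, e2, hcc]
      by_cases h0 : c = 0
      · simp [ansI, h0]
      · simp [ansI, h0, hSeq]
    have hmemU : {y : Baire | ∀ j, j < N → y j = pairB r (constSeq c) j} ∩ HdSet n ∈
        𝓝[HdSet n] (pairB r (constSeq c)) :=
      Filter.inter_mem (mem_nhdsWithin_of_mem_nhds (hUopen.mem_nhds hxU)) self_mem_nhdsWithin
    have hev : Hfun n =ᶠ[𝓝[HdSet n] (pairB r (constSeq c))]
        (fun _ => Hfun n (pairB r (constSeq c))) :=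
      Filter.eventuallyEq_of_mem hmemU key
    exact (continuousWithinAt_const).congr_of_eventuallyEq hev rfl
  · -- the reduction is correct
    rintro p ⟨i0, hi01, hi02, hi0z⟩
    refine ⟨trivial, trivial, ?_⟩
    intro q hq
    have hq' : q = constSeq ((Sset n p).ncard) := by
      have h : q = constSeq ({i | 1 ≤ i ∧ i ≤ n ∧
          isZeroSeq (projFin n i (shrinkK n p))}.ncard) := hq
      rwa [cntset_eq n hn p] at h
    subst hq'
    constructor
    · exact ⟨p, ⟨i0, hi01, hi02, hi0z⟩, rfl⟩
    · have hx1 : pairB p (constSeq (Sset n p).ncard) 1 = (Sset n p).ncard := by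
        simpa [constSeq] using pairB_one p (constSeq (Sset n p).ncard)
      have hHv : Hfun n (pairB p (constSeq (Sset n p).ncard))
          = constSeq (ansI n p ((Sset n p).ncard)) := by
        simp [Hfun, pfst_pairB, hx1]
      rw [hHv]
      by_cases hc0 : (Sset n p).ncard = 0
      · have hSempty : Sset n p = ∅ := by
          by_contra hne
          have hpos : 0 < (Sset n p).ncard :=
            (Set.ncard_pos (Sset_finite n p)).mpr (Set.nonempty_iff_ne_empty.mpr hne)
          omega
        have hi0top : i0 = n + 1 := by
          by_contra hne
          have hmem : i0 ∈ Sset n p := ⟨hi01, by omega, hi0z⟩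
          rw [hSempty] at hmem
          exact hmem
        have hz' := hi0z
        rw [hi0top] at hz'
        refine ⟨n + 1, by omega, le_refl _, hz', ?_⟩
        simp [ansI, hc0]
      · have hSne : (Sset n p).Nonempty := by
          rw [Set.nonempty_iff_ne_empty]
          intro h
          rw [h, Set.ncard_empty] at hc0
          exact hc0 rfl
        obtain ⟨hh1, hh2, hh3⟩ := Nat.sInf_mem hSne
        refine ⟨sInf (Sset n p), hh1, by omega, hh3, ?_⟩
        simp [ansI, hc0]

end MLPOvsLPOAux
/-- For all `n, k ≥ 1`: `MLPO_{n+1} <_W LPO_n` and `LPO_k ≰_W MLPO_{n+1}`. -/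
theorem MLPO_vs_LPO : ∀ n k, 1 ≤ n → 1 ≤ k →
    WLt (MLPOn (n + 1)) (LPOn n) ∧ ¬ WRed (LPOn k) (MLPOn (n + 1)) := by
  intro n k hn hk
  exact ⟨⟨mlpo_red n hn, lpo_nred (n + 1) n (by omega) hn⟩, lpo_nred (n + 1) k (by omega) hk⟩
end
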